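/- Let ω : {1,…,M} → [0, ∞) and v_1, ..., v_T ∈ ℝ^K with M ≤ T−1. Then Σ_{m=1}^M ω(m) [ Σ_{t=1}^{T−m}(v_t v_{t+m}′ + v_{t+m} v_t′) + 2 Σ_{t=1}^T v_t v_t′ ] is positive semidefinite. -/

import Mathlib

open Matrix Finset

lemma quadVMV {K:ℕ} (a b x : Fin K → ℝ) : x ⬝ᵥ (Matrix.vecMulVec a b).mulVec x = (x ⬝ᵥ a) * (x ⬝ᵥ b) := by
  simp only [Matrix.vecMulVec, Matrix.mulVec, dotProduct, Finset.mul_sum, Finset.sum_mul,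
    Matrix.of_apply]
  rw [Finset.sum_comm]
  exact Finset.sum_congr rfl fun i _ => Finset.sum_congr rfl fun j _ => by ring

lemma quadSum {K:ℕ} (s : Finset ℕ) (f : ℕ → Matrix (Fin K) (Fin K) ℝ) (x : Fin K → ℝ) :
    x ⬝ᵥ (∑ t ∈ s, f t).mulVec x = ∑ t ∈ s, x ⬝ᵥ (f t).mulVec x := by
  induction s using Finset.induction_on with
  | empty => simp [Matrix.mulVec_zero]
  | insert a s h ih =>
    rw [Finset.sum_insert h, Finset.sum_insert h, Matrix.add_mulVec, dotProduct_add, ih]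

lemma smulPSD {K:ℕ} {M : Matrix (Fin K) (Fin K) ℝ} (hM : M.PosSemidef) {c : ℝ} (hc : 0 ≤ c) :
    (c • M).PosSemidef := by
  refine Matrix.PosSemidef.of_dotProduct_mulVec_nonneg ?_ (fun x => ?_)
  · unfold Matrix.IsHermitian
    rw [Matrix.conjTranspose_smul, hM.1]
    simp
  · rw [Matrix.smul_mulVec, dotProduct_smul, smul_eq_mul]
    exact mul_nonneg hc (hM.dotProduct_mulVec_nonneg x)

lemma keyPSD {K T : ℕ} (m : ℕ) (hm1 : 1 ≤ m) (hmT : m ≤ T) (v : ℕ → Fin K → ℝ) :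
    Matrix.PosSemidef
      ((∑ t ∈ Finset.range (T - m),
            (Matrix.vecMulVec (v t) (v (t + m)) + Matrix.vecMulVec (v (t + m)) (v t)))
          + 2 • ∑ t ∈ Finset.range T, Matrix.vecMulVec (v t) (v t)) := by
  refine Matrix.PosSemidef.of_dotProduct_mulVec_nonneg ?_ ?_
  · unfold Matrix.IsHermitian
    simp only [conjTranspose_add, conjTranspose_smul, conjTranspose_sum]
    congr 1
    · refine Finset.sum_congr rfl fun t _ => ?_
      ext i j
      simp [Matrix.vecMulVec, add_comm, mul_comm]
    · refine congrArg _ (Finset.sum_congr rfl fun t _ => ?_)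
      ext i j
      simp [Matrix.vecMulVec, mul_comm]
  · intro x
    have hstar : (star x : Fin K → ℝ) = x := by simp
    rw [hstar]
    set c : ℕ → ℝ := fun t => x ⬝ᵥ v t with hc
    have key : x ⬝ᵥ ((∑ t ∈ Finset.range (T - m),
            (Matrix.vecMulVec (v t) (v (t + m)) + Matrix.vecMulVec (v (t + m)) (v t)))
          + 2 • ∑ t ∈ Finset.range T, Matrix.vecMulVec (v t) (v t)).mulVec x
        = (∑ t ∈ Finset.range (T - m), 2 * (c t * c (t + m)))
          + 2 * ∑ t ∈ Finset.range T, c t ^ 2 := by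
      have hS : x ⬝ᵥ (∑ t ∈ Finset.range T, Matrix.vecMulVec (v t) (v t)).mulVec x
          = ∑ t ∈ Finset.range T, c t ^ 2 := by
        rw [quadSum]
        exact Finset.sum_congr rfl fun t _ => by rw [quadVMV]; ring
      have hC : x ⬝ᵥ (∑ t ∈ Finset.range (T - m),
            (Matrix.vecMulVec (v t) (v (t + m)) + Matrix.vecMulVec (v (t + m)) (v t))).mulVec x
          = ∑ t ∈ Finset.range (T - m), 2 * (c t * c (t + m)) := by
        rw [quadSum]
        refine Finset.sum_congr rfl fun t _ => ?_
        rw [Matrix.add_mulVec, dotProduct_add, quadVMV, quadVMV]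
        ring
      rw [Matrix.add_mulVec, dotProduct_add, two_smul, Matrix.add_mulVec,
        dotProduct_add, hS, hC]
      ring
    rw [key]
    have hsq : (0:ℝ) ≤ ∑ t ∈ Finset.range (T - m), (c t + c (t + m)) ^ 2 :=
      Finset.sum_nonneg fun t _ => sq_nonneg _
    have hexp : ∑ t ∈ Finset.range (T - m), (c t + c (t + m)) ^ 2
        = (∑ t ∈ Finset.range (T - m), 2 * (c t * c (t + m)))
          + ∑ t ∈ Finset.range (T - m), c t ^ 2
          + ∑ t ∈ Finset.range (T - m), c (t + m) ^ 2 := by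
      rw [← Finset.sum_add_distrib, ← Finset.sum_add_distrib]
      exact Finset.sum_congr rfl fun t _ => by ring
    have h1 : ∑ t ∈ Finset.range (T - m), c t ^ 2 ≤ ∑ t ∈ Finset.range T, c t ^ 2 :=
      Finset.sum_le_sum_of_subset_of_nonneg
        (Finset.range_subset_range.2 (Nat.sub_le T m)) (fun t _ _ => sq_nonneg _)
    have h2 : ∑ t ∈ Finset.range (T - m), c (t + m) ^ 2 ≤ ∑ t ∈ Finset.range T, c t ^ 2 := by
      have heq : ∑ t ∈ Finset.range (T - m), c (t + m) ^ 2
          = ∑ t ∈ Finset.Ico m (m + (T - m)), c t ^ 2 := by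
        rw [Finset.sum_Ico_eq_sum_range]
        simp only [Nat.add_sub_cancel_left]
        exact Finset.sum_congr rfl fun t _ => by rw [add_comm]
      rw [heq]
      refine Finset.sum_le_sum_of_subset_of_nonneg ?_ (fun t _ _ => sq_nonneg _)
      rw [Nat.add_sub_cancel' hmT]
      intro t ht
      simp only [Finset.mem_Ico] at ht
      exact Finset.mem_range.2 ht.2
    linarith

theorem stmt_9 (K T M : ℕ) (hM : M ≤ T - 1) (ω : ℕ → ℝ) (hω : ∀ m, 0 ≤ ω m)
    (v : ℕ → Fin K → ℝ) :
    Matrix.PosSemidef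
      (∑ m ∈ Finset.Icc 1 M, ω m •
        ((∑ t ∈ Finset.range (T - m),
            (Matrix.vecMulVec (v t) (v (t + m)) + Matrix.vecMulVec (v (t + m)) (v t)))
          + 2 • ∑ t ∈ Finset.range T, Matrix.vecMulVec (v t) (v t))) := by
  refine Finset.sum_induction _ _ (fun a b ha hb => ha.add hb) Matrix.PosSemidef.zero ?_
  intro m hm
  rw [Finset.mem_Icc] at hm
  have hmT : m ≤ T := le_trans (le_trans hm.2 hM) (Nat.sub_le T 1)
  exact smulPSD (keyPSD m hm.1 hmT v) (hω m)
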